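/- Let p, q be natural numbers with p ≥ 1 and q ≥ 1, and for a quaternion Z let j_Z on (Fin p → ℍ) × (Fin q → ℍ) be defined by j_Z(u,v) = (fun i => Z * u i, fun k => v k * Z). Let X and Y be purely imaginary quaternions with X*Y ≠ Y*X. Then there is no quaternion W such that j_X ∘ j_Y - j_Y ∘ j_X = j_W. In particular, in the non-isotypic case the family {j_Z : Z purely imaginary} is not closed under the commutator bracket, so the corresponding generalized Heisenberg group with 3-dimensional center and 𝔳 non-isotypic fails Gordon's criterion for natural reductivity. -/

import Mathlib

open Quaternion

/-- Gordon's map `j_Z` on `(Fin p → ℍ) × (Fin q → ℍ)`. -/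
noncomputable def gordonJ (p q : ℕ) (Z : ℍ[ℝ]) :
    (Fin p → ℍ[ℝ]) × (Fin q → ℍ[ℝ]) → (Fin p → ℍ[ℝ]) × (Fin q → ℍ[ℝ]) :=
  fun w => (fun i => Z * w.1 i, fun k => w.2 k * Z)

/-- In the non-isotypic case (`p ≥ 1` and `q ≥ 1`), for purely imaginary `X`, `Y`
with `X*Y ≠ Y*X`, the commutator `[j_X, j_Y]` is not of the form `j_W` for any
quaternion `W`: the family `{j_Z}` is not closed under the bracket, so the
corresponding generalized Heisenberg group fails Gordon's criterion for
natural reductivity. -/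
theorem gordonJ_commutator_not_in_family (p q : ℕ) (hp : 1 ≤ p) (hq : 1 ≤ q)
    (X Y : ℍ[ℝ]) (hX : X.re = 0) (hY : Y.re = 0) (hXY : X * Y ≠ Y * X) :
    ¬ ∃ W : ℍ[ℝ],
      (gordonJ p q X ∘ gordonJ p q Y) - (gordonJ p q Y ∘ gordonJ p q X)
        = gordonJ p q W := by
  rintro ⟨W, hW⟩
  have i0 : Fin p := ⟨0, hp⟩
  have k0 : Fin q := ⟨0, hq⟩
  have h1 : X * Y - Y * X = W := by
    have := congrFun (congrArg Prod.fst
      (congrFun hW ((fun _ => 1, fun _ => 0) : (Fin p → ℍ[ℝ]) × (Fin q → ℍ[ℝ])))) i0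
    simpa [gordonJ, mul_assoc] using this
  have h2 : Y * X - X * Y = W := by
    have := congrFun (congrArg Prod.snd
      (congrFun hW ((fun _ => 0, fun _ => 1) : (Fin p → ℍ[ℝ]) × (Fin q → ℍ[ℝ])))) k0
    simpa [gordonJ, mul_assoc] using this
  apply hXY
  have h3 : X * Y - Y * X = -(X * Y - Y * X) := by
    rw [neg_sub]; exact h1.trans h2.symm
  have h4 : (X * Y - Y * X) + (X * Y - Y * X) = 0 := by
    nth_rewrite 2 [h3]; exact add_neg_cancel _
  have h5 : (2 : ℝ) • (X * Y - Y * X) = 0 := by rw [two_smul]; exact h4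
  have h6 := (smul_eq_zero.mp h5).resolve_left (by norm_num)
  exact sub_eq_zero.mp h6
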